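/- For any r ≥ 2, the word w = x_1 x_2 ... x_{r-1} x_r^2 x_{r-1} ... x_2 x_1 (ending with x_1 rather than x_1^{-1}) is not primitivity-blocking in F_r. -/

import Mathlib

open FreeGroup

/-- The free group of rank `r` on the basis `Fin r`. -/
abbrev F (r : ℕ) := FreeGroup (Fin r)

/-- `v` is a subword of `u`: the reduced word of `v` occurs as a contiguous
block of the reduced word of `u`. -/
def Subword {α : Type*} [DecidableEq α] (v u : FreeGroup α) : Prop :=
  v.toWord <:+: u.toWord

/-- `u` is cyclically reduced: the first letter of its reduced word is not the
inverse of its last letter. -/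
def CyclRed {α : Type*} [DecidableEq α] (u : FreeGroup α) : Prop :=
  ∀ a ∈ u.toWord.head?, ∀ b ∈ u.toWord.getLast?, a ≠ (b.1, !b.2)

/-- `u` is primitive: some automorphism sends a generator to `u`
(equivalently, `u` belongs to a basis). -/
def IsPrimitive {α : Type*} [DecidableEq α] (u : FreeGroup α) : Prop :=
  ∃ (φ : FreeGroup α ≃* FreeGroup α) (i : α), φ (FreeGroup.of i) = u

/-- `v` is primitivity-blocking: it is not a subword of any cyclically reduced
primitive element. -/
def PrimitivityBlocking {α : Type*} [DecidableEq α] (v : FreeGroup α) : Prop :=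
  ∀ u : FreeGroup α, IsPrimitive u → CyclRed u → ¬ Subword v u

/-- Reduced word length. -/
def len {α : Type*} [DecidableEq α] (u : FreeGroup α) : ℕ := u.toWord.length

/-- `v` is `w`-orbit-blocking: for every automorphism `φ`, `v` is not a subword
of the cyclic reduction of `φ w` (i.e. of any cyclically reduced element
conjugate to `φ w`). -/
def OrbitBlocking {α : Type*} [DecidableEq α] (w v : FreeGroup α) : Prop :=
  ∀ (φ : FreeGroup α ≃* FreeGroup α) (c : FreeGroup α),
    CyclRed c → IsConj c (φ w) → ¬ Subword v c

/-- A word is slender if some generator occurs (with exponent `±1`) at most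
once in its reduced word. -/
def Slender {α : Type*} [DecidableEq α] (w : FreeGroup α) : Prop :=
  ∃ x : α, (w.toWord.countP fun p => decide (p.1 = x)) ≤ 1

section aux

lemma reduce_all_true {α : Type*} [DecidableEq α] (L : List (α × Bool))
    (h : ∀ p ∈ L, p.2 = true) : FreeGroup.reduce L = L := by
  induction L with
  | nil => rfl
  | cons x L ih =>
    have hx : x.2 = true := h x (List.mem_cons_self)
    have hL : ∀ p ∈ L, p.2 = true := fun p hp => h p (List.mem_cons_of_mem _ hp)
    rw [FreeGroup.reduce.cons, ih hL]
    cases L with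
    | nil => rfl
    | cons y L' =>
      have hy : y.2 = true := hL y (List.mem_cons_self)
      simp [hx, hy]

lemma lift_mk_fixed {α : Type*} [DecidableEq α] (f : α → FreeGroup α)
    (L : List (α × Bool)) (h : ∀ p ∈ L, p.2 = true ∧ f p.1 = FreeGroup.of p.1) :
    FreeGroup.lift f (FreeGroup.mk L) = FreeGroup.mk L := by
  induction L with
  | nil =>
    have h1 : FreeGroup.mk ([] : List (α × Bool)) = 1 := rfl
    rw [h1, _root_.map_one]
  | cons x L ih =>
    obtain ⟨hx2, hxf⟩ := h x (List.mem_cons_self)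
    have hL := fun p hp => h p (List.mem_cons_of_mem x hp)
    have hcons : FreeGroup.mk (x :: L) = FreeGroup.of x.1 * FreeGroup.mk L := by
      have h2 : FreeGroup.of x.1 = FreeGroup.mk [(x.1, true)] := rfl
      rw [h2, FreeGroup.mul_mk]
      congr 1
      simp [← hx2]
    rw [hcons, _root_.map_mul, FreeGroup.lift_apply_of, hxf, ih hL]

/-- The middle part of the word. -/
def Ulist (n : ℕ) : List (Fin (n+2) × Bool) :=
  (List.ofFn fun i : Fin (n+1) => ((i.succ : Fin (n+2)), true)) ++
  (List.ofFn fun i : Fin (n+1) => (((i.castSucc : Fin (n+2)).rev), true))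

lemma Ulist_spec (n : ℕ) : ∀ p ∈ Ulist n, p.2 = true ∧ p.1 ≠ 0 := by
  intro p hp
  rw [Ulist, List.mem_append] at hp
  rcases hp with hp | hp <;> rw [List.mem_ofFn] at hp <;> obtain ⟨i, hi⟩ := hp <;> subst hi
  · exact ⟨rfl, Fin.succ_ne_zero i⟩
  · refine ⟨rfl, fun h => ?_⟩
    have := congrArg Fin.rev h
    rw [Fin.rev_rev, Fin.rev_zero] at this
    exact absurd this (Fin.ne_of_lt (Fin.castSucc_lt_last i))

def eElt (n : ℕ) : F (n+2) := FreeGroup.mk (Ulist n)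

def vList (n : ℕ) : List (Fin (n+2) × Bool) :=
  Ulist n ++ (((0 : Fin (n+2)), true) :: Ulist n ++
    [((0 : Fin (n+2)), true), ((1 : Fin (n+2)), true)])

def vElt (n : ℕ) : F (n+2) := FreeGroup.mk (vList n)

lemma vList_spec (n : ℕ) : ∀ p ∈ vList n, p.2 = true := by
  intro p hp
  rw [vList] at hp
  simp only [List.mem_append, List.mem_cons, List.mem_singleton,
    List.not_mem_nil, or_false] at hp
  rcases hp with hp | (hp | hp) | hp | hp
  · exact (Ulist_spec n p hp).1
  · rw [hp]
  · exact (Ulist_spec n p hp).1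
  · rw [hp]
  · rw [hp]

lemma vElt_eq (n : ℕ) :
    vElt n = eElt n * of 0 * (eElt n * of 0 * of 1) := by
  have h0 : (of 0 : F (n+2)) = FreeGroup.mk [((0 : Fin (n+2)), true)] := rfl
  have h1 : (of 1 : F (n+2)) = FreeGroup.mk [((1 : Fin (n+2)), true)] := rfl
  rw [vElt, eElt, h0, h1]
  simp only [FreeGroup.mul_mk]
  congr 1
  simp [vList]

lemma wlist_eq (n : ℕ) :
    ((List.ofFn fun i : Fin (n+2) => ((i : Fin (n+2)), true)) ++
     (List.ofFn fun i : Fin (n+2) => ((i.rev : Fin (n+2)), true)))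
    = ((0 : Fin (n+2)), true) :: (Ulist n ++ [((0 : Fin (n+2)), true)]) := by
  rw [List.ofFn_succ (f := fun i : Fin (n+2) => ((i : Fin (n+2)), true)),
      List.ofFn_succ' (f := fun i : Fin (n+2) => ((i.rev : Fin (n+2)), true))]
  simp [Ulist, Fin.rev_last, List.concat_eq_append, List.append_assoc]

end aux

/-- `x1 x2 ⋯ x_{r-1} x_r^2 x_{r-1} ⋯ x2 x1` is not
primitivity-blocking in `F_r`, `r ≥ 2`. -/
theorem stmt11 (r : ℕ) (hr : 2 ≤ r) :
    ¬ PrimitivityBlocking (FreeGroup.mk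
      ((List.ofFn fun i : Fin r => ((i : Fin r), true)) ++
       (List.ofFn fun i : Fin r => ((i.rev : Fin r), true)))) := by
  obtain ⟨n, rfl⟩ : ∃ n, r = n + 2 := ⟨r - 2, by omega⟩
  intro H
  -- all-true facts
  have hwall : ∀ p ∈ ((0 : Fin (n+2)), true) :: (Ulist n ++ [((0 : Fin (n+2)), true)]),
      p.2 = true := by
    intro p hp
    simp only [List.mem_cons, List.mem_append, List.mem_singleton,
      List.not_mem_nil, or_false] at hp
    rcases hp with hp | hp | hp
    · rw [hp]
    · exact (Ulist_spec n p hp).1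
    · rw [hp]
  have hvw : (vElt n).toWord = vList n := by
    rw [vElt, FreeGroup.toWord_mk, reduce_all_true _ (vList_spec n)]
  -- Primitivity
  have hprim : IsPrimitive (vElt n) := by
    set f0 : Fin (n+2) → F (n+2) := fun i => if i = 0 then eElt n * of 0 else of i with hf0
    set g0 : Fin (n+2) → F (n+2) := fun i => if i = 0 then (eElt n)⁻¹ * of 0 else of i with hg0
    set f1 : Fin (n+2) → F (n+2) := fun i => if i = 1 then of 0 * of 0 * of 1 else of i with hf1
    set g1 : Fin (n+2) → F (n+2) := fun i => if i = 1 then (of 0)⁻¹ * ((of 0)⁻¹ * of 1) else of i with hg1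
    have hf0e : FreeGroup.lift f0 (eElt n) = eElt n :=
      lift_mk_fixed _ _ (fun p hp => ⟨(Ulist_spec n p hp).1, by
        simp [hf0, (Ulist_spec n p hp).2]⟩)
    have hg0e : FreeGroup.lift g0 (eElt n) = eElt n :=
      lift_mk_fixed _ _ (fun p hp => ⟨(Ulist_spec n p hp).1, by
        simp [hg0, (Ulist_spec n p hp).2]⟩)
    have hA1 : (FreeGroup.lift g0).comp (FreeGroup.lift f0) = MonoidHom.id (F (n+2)) := by
      apply FreeGroup.ext_hom
      intro a
      by_cases ha : a = 0
      · subst ha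
        simp [hf0, _root_.map_mul, hg0e, FreeGroup.lift_apply_of, hg0, mul_assoc]
        rw [← hg0, hg0e, mul_inv_cancel_left]
      · simp [hf0, hg0, ha, FreeGroup.lift_apply_of]
    have hA2 : (FreeGroup.lift f0).comp (FreeGroup.lift g0) = MonoidHom.id (F (n+2)) := by
      apply FreeGroup.ext_hom
      intro a
      by_cases ha : a = 0
      · subst ha
        simp [hg0, _root_.map_mul, hf0e, FreeGroup.lift_apply_of, hf0, ← mul_assoc]
        rw [← hf0, hf0e, inv_mul_cancel]
      · simp [hf0, hg0, ha, FreeGroup.lift_apply_of]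
    have hC1 : (FreeGroup.lift g1).comp (FreeGroup.lift f1) = MonoidHom.id (F (n+2)) := by
      apply FreeGroup.ext_hom
      intro a
      by_cases ha : a = 1
      · subst ha
        simp [hf1, hg1, _root_.map_mul, FreeGroup.lift_apply_of, mul_assoc]
      · simp [hf1, hg1, ha, FreeGroup.lift_apply_of]
    have hC2 : (FreeGroup.lift f1).comp (FreeGroup.lift g1) = MonoidHom.id (F (n+2)) := by
      apply FreeGroup.ext_hom
      intro a
      by_cases ha : a = 1
      · subst ha
        simp [hf1, hg1, _root_.map_mul, FreeGroup.lift_apply_of, mul_assoc]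
      · simp [hf1, hg1, ha, FreeGroup.lift_apply_of]
    let A : F (n+2) ≃* F (n+2) := MonoidHom.toMulEquiv _ _ hA1 hA2
    let C : F (n+2) ≃* F (n+2) := MonoidHom.toMulEquiv _ _ hC1 hC2
    refine ⟨C.trans A, 1, ?_⟩
    have hCof : C (of 1) = of 0 * of 0 * of 1 := by
      show FreeGroup.lift f1 (of 1) = _
      simp [hf1, FreeGroup.lift_apply_of]
    have : (C.trans A) (of 1) = FreeGroup.lift f0 (of 0 * of 0 * of 1) := by
      rw [MulEquiv.trans_apply, hCof]; rfl
    rw [this, _root_.map_mul, _root_.map_mul, FreeGroup.lift_apply_of, FreeGroup.lift_apply_of]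
    simp only [hf0, if_pos rfl, if_neg (one_ne_zero : (1 : Fin (n+2)) ≠ 0)]
    rw [vElt_eq]
    group
  -- Cyclic reducedness
  have hcyc : CyclRed (vElt n) := by
    intro a ha b hb hab
    rw [hvw] at ha hb
    have ha' : a ∈ vList n := by
      rw [List.eq_cons_of_mem_head? ha]
      exact List.mem_cons_self
    have hb' : b ∈ vList n := List.mem_of_getLast? (Option.mem_def.mp hb)
    have h1 := vList_spec n a ha'
    have h2 := vList_spec n b hb'
    rw [hab] at h1
    rw [h2] at h1
    simp at h1
  -- Subword
  have hsub : Subword (FreeGroup.mk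
      ((List.ofFn fun i : Fin (n+2) => ((i : Fin (n+2)), true)) ++
       (List.ofFn fun i : Fin (n+2) => ((i.rev : Fin (n+2)), true)))) (vElt n) := by
    rw [Subword, hvw, FreeGroup.toWord_mk, wlist_eq n, reduce_all_true _ hwall]
    refine ⟨Ulist n, [((1 : Fin (n+2)), true)], ?_⟩
    simp [vList, List.append_assoc]
  exact H (vElt n) hprim hcyc hsub
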